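/- arXiv:2108.02697 — 2 statements merged into one kernel-verified Lean document; each statement's English description precedes it below -/
import Mathlib

section
/- For every finite simple outerplanar graph G and every dominating set S of G, one has |B_S(G)| ≤ 36·|S|, where B_S(G) = V_{4+}(G) \ S. -/
/-- `HasMinor G H` : the graph `H` is a minor of `G`, witnessed by pairwise disjoint
nonempty connected branch sets, one for each vertex of `H`, with an edge of `G`
between the branch sets of any two adjacent vertices of `H`. -/
def HasMinor {V W : Type*} (G : SimpleGraph V) (H : SimpleGraph W) : Prop :=
  ∃ f : W → Set V,
    (∀ w, (f w).Nonempty) ∧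
    (∀ w, (SimpleGraph.induce (f w) G).Connected) ∧
    (∀ w₁ w₂, w₁ ≠ w₂ → Disjoint (f w₁) (f w₂)) ∧
    (∀ w₁ w₂, H.Adj w₁ w₂ → ∃ v₁ ∈ f w₁, ∃ v₂ ∈ f w₂, G.Adj v₁ v₂)

/-- A graph is outerplanar iff it has no `K₄` minor and no `K_{2,3}` minor. -/
def Outerplanar {V : Type*} (G : SimpleGraph V) : Prop :=
  ¬ HasMinor G (⊤ : SimpleGraph (Fin 4)) ∧
  ¬ HasMinor G (completeBipartiteGraph (Fin 2) (Fin 3))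

/-- `S` is a dominating set of `G`: every vertex not in `S` has a neighbor in `S`. -/
def IsDominatingSet {V : Type*} (G : SimpleGraph V) (S : Set V) : Prop :=
  ∀ v ∉ S, ∃ u ∈ S, G.Adj u v

/-- `V_{4+}(G)` : the set of vertices of degree at least 4. -/
def V4plus {V : Type*} (G : SimpleGraph V) : Set V :=
  {v | 4 ≤ (G.neighborSet v).ncard}

/-- `V*(G)` : the set of vertices of degree at most 3 all of whose neighbors have
degree at most 3. -/
def Vstar {V : Type*} (G : SimpleGraph V) : Set V :=
  {v | (G.neighborSet v).ncard ≤ 3 ∧ ∀ u ∈ G.neighborSet v, (G.neighborSet u).ncard ≤ 3}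

/- ------------------------------------------------------------------ -/
/- Auxiliary material -/

open Relation

abbrev K23G : SimpleGraph (Sum (Fin 2) (Fin 3)) := completeBipartiteGraph (Fin 2) (Fin 3)

section helpers
variable {V : Type*} {G : SimpleGraph V}

def StepRel (G : SimpleGraph V) (A : Set V) (a b : V) : Prop :=
  a ∈ A ∧ b ∈ A ∧ G.Adj a b

lemma stepRel_symm (A : Set V) : Symmetric (StepRel G A) :=
  fun _ _ h => ⟨h.2.1, h.1, h.2.2.symm⟩

lemma rtg_lift {r s : V → V → Prop} (h : ∀ a b, r a b → ReflTransGen s a b)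
    {a b : V} (hr : ReflTransGen r a b) : ReflTransGen s a b := by
  induction hr with
  | refl => exact ReflTransGen.refl
  | tail _ hstep ih => exact ih.trans (h _ _ hstep)

lemma induce_connected_iff {A : Set V} :
    (SimpleGraph.induce A G).Connected ↔
      A.Nonempty ∧ ∀ a ∈ A, ∀ b ∈ A, ReflTransGen (StepRel G A) a b := by
  rw [SimpleGraph.connected_iff]
  constructor
  · rintro ⟨hpre, hne⟩
    obtain ⟨⟨a0, ha0⟩⟩ := hne
    refine ⟨⟨a0, ha0⟩, ?_⟩
    intro a ha b hb
    obtain ⟨w⟩ := hpre ⟨a, ha⟩ ⟨b, hb⟩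
    have key : ∀ (x y : A) (_ : (SimpleGraph.induce A G).Walk x y),
        ReflTransGen (StepRel G A) x.1 y.1 := by
      intro x y w
      induction w with
      | nil => exact ReflTransGen.refl
      | cons h p ih =>
        exact ReflTransGen.head ⟨Subtype.mem _, Subtype.mem _, h⟩ ih
    exact key _ _ w
  · rintro ⟨⟨a0, ha0⟩, h⟩
    refine ⟨?_, ⟨⟨a0, ha0⟩⟩⟩
    rintro ⟨a, ha⟩ ⟨b, hb⟩
    have hr := h a ha b hb
    have key : ∀ b' (_ : ReflTransGen (StepRel G A) a b') (hb' : b' ∈ A),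
        (SimpleGraph.induce A G).Reachable ⟨a, ha⟩ ⟨b', hb'⟩ := by
      intro b' hr
      induction hr with
      | refl => intro _; rfl
      | @tail c d hac hcd ih =>
        intro hd
        exact SimpleGraph.Reachable.trans (ih hcd.1)
          ⟨SimpleGraph.Walk.cons (by exact hcd.2.2) SimpleGraph.Walk.nil⟩
    exact key b hr hb

lemma connected_induce_singleton (a : V) : (SimpleGraph.induce {a} G).Connected := by
  rw [induce_connected_iff]
  refine ⟨⟨a, rfl⟩, ?_⟩
  rintro x rfl y rfl
  exact ReflTransGen.refl

lemma connected_induce_pair {a b : V} (h : G.Adj a b) :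
    (SimpleGraph.induce {a, b} G).Connected := by
  rw [induce_connected_iff]
  refine ⟨⟨a, Or.inl rfl⟩, ?_⟩
  have hab : ReflTransGen (StepRel G {a, b}) a b :=
    ReflTransGen.single ⟨Or.inl rfl, Or.inr rfl, h⟩
  rintro x (rfl | rfl) y (rfl | rfl)
  · exact ReflTransGen.refl
  · exact hab
  · exact (@Relation.ReflTransGen.stdSymm _ _ ⟨fun _ _ h => stepRel_symm _ h⟩).symm _ _ hab
  · exact ReflTransGen.refl

lemma k23_of (a b : V) (C : Fin 3 → Set V)
    (hab : a ≠ b)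
    (hCne : ∀ i, (C i).Nonempty)
    (hCconn : ∀ i, (SimpleGraph.induce (C i) G).Connected)
    (hCdisj : ∀ i j, i ≠ j → Disjoint (C i) (C j))
    (haC : ∀ i, a ∉ C i) (hbC : ∀ i, b ∉ C i)
    (haAdj : ∀ i, ∃ u ∈ C i, G.Adj a u)
    (hbAdj : ∀ i, ∃ u ∈ C i, G.Adj b u) :
    HasMinor G K23G := by
  classical
  refine ⟨fun w => Sum.elim (fun i => if i = 0 then ({a} : Set V) else {b}) C w, ?_, ?_, ?_, ?_⟩
  · rintro (i | i)
    · by_cases h : i = 0 <;> simp [h]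
    · exact hCne i
  · rintro (i | i)
    · by_cases h : i = 0
      · rw [show (fun w => Sum.elim (fun i => if i = 0 then ({a} : Set V) else {b}) C w) (Sum.inl i) = {a} by simp [h]]
        exact connected_induce_singleton _
      · rw [show (fun w => Sum.elim (fun i => if i = 0 then ({a} : Set V) else {b}) C w) (Sum.inl i) = {b} by simp [h]]
        exact connected_induce_singleton _
    · exact hCconn i
  · rintro (i | i) (j | j) hne
    · have : i ≠ j := by simpa using hne
      by_cases hi : i = 0 <;> by_cases hj : j = 0
      · exact absurd (hi.trans hj.symm) this
      · simp [hi, hj, Set.disjoint_singleton, hab]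
      · simp [hi, hj, Set.disjoint_singleton, hab.symm]
      · exact absurd (by omega : (i : Fin 2) = j) this
    · by_cases hi : i = 0
      · simpa [hi] using fun h => (haC j h)
      · have : (fun i => if i = 0 then ({a} : Set V) else {b}) i = {b} := by simp [hi]
        simp only [Sum.elim_inl, Sum.elim_inr, this]
        simpa using fun h => (hbC j h)
    · by_cases hj : j = 0
      · simpa [hj] using fun h => (haC i h)
      · have : (fun i => if i = 0 then ({a} : Set V) else {b}) j = {b} := by simp [hj]
        simp only [Sum.elim_inl, Sum.elim_inr, this]
        simpa using fun h => (hbC i h)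
    · exact hCdisj i j (by simpa using hne)
  · rintro (i | i) (j | j) hadj
    · simp [completeBipartiteGraph] at hadj
    · by_cases hi : i = 0
      · obtain ⟨u, hu, hau⟩ := haAdj j
        exact ⟨a, by simp [hi], u, hu, hau⟩
      · obtain ⟨u, hu, hbu⟩ := hbAdj j
        exact ⟨b, by simp [hi], u, hu, hbu⟩
    · by_cases hj : j = 0
      · obtain ⟨u, hu, hau⟩ := haAdj i
        exact ⟨u, hu, a, by simp [hj], hau.symm⟩
      · obtain ⟨u, hu, hbu⟩ := hbAdj i
        exact ⟨u, hu, b, by simp [hj], hbu.symm⟩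
    · simp [completeBipartiteGraph] at hadj

/-- In a `K_{2,3}`-minor-free graph, two distinct vertices have at most two
common neighbours. -/
lemma common_le_two (hG : ¬ HasMinor G K23G) {a b : V} (hab : a ≠ b) :
    ((G.neighborSet a) ∩ (G.neighborSet b)).ncard ≤ 2 := by
  by_contra hcon
  push_neg at hcon
  obtain ⟨t, hts, htc⟩ := Set.exists_subset_card_eq (show 3 ≤ _ from hcon)
  obtain ⟨x, y, z, hxy, hxz, hyz, rfl⟩ := Set.ncard_eq_three.mp htc
  have hx := hts (show x ∈ ({x, y, z} : Set V) by simp)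
  have hy := hts (show y ∈ ({x, y, z} : Set V) by simp)
  have hz := hts (show z ∈ ({x, y, z} : Set V) by simp)
  apply hG
  apply k23_of a b (fun i => if i = 0 then {x} else if i = 1 then {y} else {z}) hab
  · intro i
    by_cases h0 : i = 0
    · simp [h0]
    · by_cases h1 : i = 1 <;> simp [h0, h1]
  · intro i
    by_cases h0 : i = 0
    · rw [show (if i = 0 then ({x} : Set V) else if i = 1 then {y} else {z}) = {x} by simp [h0]]
      exact connected_induce_singleton _
    · by_cases h1 : i = 1
      · rw [show (if i = 0 then ({x} : Set V) else if i = 1 then {y} else {z}) = {y} by simp [h0, h1]]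
        exact connected_induce_singleton _
      · rw [show (if i = 0 then ({x} : Set V) else if i = 1 then {y} else {z}) = {z} by simp [h0, h1]]
        exact connected_induce_singleton _
  · intro i j hij
    fin_cases i <;> fin_cases j <;>
      simp_all [Set.disjoint_singleton, hxy, hxz, hyz, hxy.symm, hxz.symm, hyz.symm]
  · intro i
    have hax : a ≠ x := fun h => G.irrefl (h ▸ hx.1)
    have hay : a ≠ y := fun h => G.irrefl (h ▸ hy.1)
    have haz : a ≠ z := fun h => G.irrefl (h ▸ hz.1)
    by_cases h0 : i = 0
    · simp [h0, hax]
    · by_cases h1 : i = 1 <;> simp [h0, h1, hay, haz]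
  · intro i
    have hbx : b ≠ x := fun h => G.irrefl (h ▸ hx.2)
    have hby : b ≠ y := fun h => G.irrefl (h ▸ hy.2)
    have hbz : b ≠ z := fun h => G.irrefl (h ▸ hz.2)
    by_cases h0 : i = 0
    · simp [h0, hbx]
    · by_cases h1 : i = 1 <;> simp [h0, h1, hby, hbz]
  · intro i
    by_cases h0 : i = 0
    · exact ⟨x, by simp [h0], hx.1⟩
    · by_cases h1 : i = 1
      · exact ⟨y, by simp [h0, h1], hy.1⟩
      · exact ⟨z, by simp [h0, h1], hz.1⟩
  · intro i
    by_cases h0 : i = 0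
    · exact ⟨x, by simp [h0], hx.2⟩
    · by_cases h1 : i = 1
      · exact ⟨y, by simp [h0, h1], hy.2⟩
      · exact ⟨z, by simp [h0, h1], hz.2⟩

end helpers

/-- counting with bounded fibers -/
lemma ncard_le_mul_of_fibers {α β : Type*} (A : Set α) (P : Set β) (f : α → β) (k : ℕ)
    (hA : A.Finite) (hP : P.Finite)
    (hmap : ∀ a ∈ A, f a ∈ P)
    (hfib : ∀ p ∈ P, (A ∩ f ⁻¹' {p}).ncard ≤ k) :
    A.ncard ≤ k * P.ncard := by
  classical
  rw [Set.ncard_eq_toFinset_card _ hA, Set.ncard_eq_toFinset_card _ hP]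
  refine Finset.card_le_mul_card_image_of_maps_to (f := f) ?_ k ?_
  · intro a ha
    rw [Set.Finite.mem_toFinset] at ha ⊢
    exact hmap a ha
  · intro p hp
    rw [Set.Finite.mem_toFinset] at hp
    have hsub : (hA.toFinset.filter fun x => f x = p) ⊆ (hA.inter_of_left (f ⁻¹' {p})).toFinset := by
      intro a ha
      rw [Finset.mem_filter, Set.Finite.mem_toFinset] at ha
      rw [Set.Finite.mem_toFinset]
      exact ⟨ha.1, ha.2⟩
    calc (hA.toFinset.filter fun x => f x = p).card
        ≤ (hA.inter_of_left (f ⁻¹' {p})).toFinset.card := Finset.card_le_card hsub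
      _ = (A ∩ f ⁻¹' {p}).ncard := (Set.ncard_eq_toFinset_card _ _).symm
      _ ≤ k := hfib p hp

section density
variable {W : Type*} [Fintype W]

/-- contraction of the edge `vx` in place: `v` becomes isolated, `x` absorbs it. -/
def contractAux (H : SimpleGraph W) (v x : W) : SimpleGraph W where
  Adj a b := a ≠ b ∧ a ≠ v ∧ b ≠ v ∧
    (H.Adj a b ∨ (a = x ∧ H.Adj v b) ∨ (b = x ∧ H.Adj v a))
  symm := by
    constructor
    rintro a b ⟨h1, h2, h3, h4⟩
    refine ⟨h1.symm, h3, h2, ?_⟩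
    rcases h4 with h | ⟨rfl, h⟩ | ⟨rfl, h⟩
    · exact Or.inl h.symm
    · exact Or.inr (Or.inr ⟨rfl, h⟩)
    · exact Or.inr (Or.inl ⟨rfl, h⟩)
  loopless := by constructor; rintro a ⟨h1, -⟩; exact h1 rfl

lemma contract_no_K23 {H : SimpleGraph W} {v x : W} (hvx : H.Adj v x)
    (hH : ¬ HasMinor H K23G) : ¬ HasMinor (contractAux H v x) K23G := by
  classical
  rintro ⟨f, hne, hconn, hdisj, hadj⟩
  set H' := contractAux H v x with hH'
  have hv_not : ∀ w, v ∉ f w := by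
    intro w hv
    by_cases hsing : ∃ u ∈ f w, u ≠ v
    · obtain ⟨u, hu, huv⟩ := hsing
      have hc := (induce_connected_iff.mp (hconn w)).2 v hv u hu
      rcases hc.cases_head with h | ⟨c, hstep, -⟩
      · exact huv h.symm
      · exact hstep.2.2.2.1 rfl
    · push_neg at hsing
      have hfw : f w = {v} := Set.eq_singleton_iff_unique_mem.mpr ⟨hv, fun u hu => hsing u hu⟩
      obtain ⟨w', hww'⟩ : ∃ w', K23G.Adj w w' := by
        rcases w with i | j
        · exact ⟨Sum.inr 0, by simp⟩
        · exact ⟨Sum.inl 0, by simp⟩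
      obtain ⟨v₁, hv₁, v₂, hv₂, hadj12⟩ := hadj _ _ hww'
      rw [hfw] at hv₁
      rcases hv₁ with rfl
      exact hadj12.2.1 rfl
  set g : Sum (Fin 2) (Fin 3) → Set W := fun w => f w ∪ {u | u = v ∧ x ∈ f w} with hg
  have hsub : ∀ w, f w ⊆ g w := fun w => Set.subset_union_left
  have hmemg : ∀ w u, u ∈ g w ↔ (u ∈ f w ∨ (u = v ∧ x ∈ f w)) := by intro w u; rfl
  refine hH ⟨g, fun w => (hne w).mono (hsub w), ?_, ?_, ?_⟩
  · intro w
    rw [induce_connected_iff]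
    refine ⟨(hne w).mono (hsub w), ?_⟩
    have hmain : ∀ a ∈ f w, ∀ b ∈ f w, ReflTransGen (StepRel H (g w)) a b := by
      intro a ha b hb
      have h' := (induce_connected_iff.mp (hconn w)).2 a ha b hb
      refine rtg_lift ?_ h'
      rintro c d ⟨hc, hd, hcd⟩
      rcases hcd.2.2.2 with h | ⟨rfl, h⟩ | ⟨rfl, h⟩
      · exact ReflTransGen.single ⟨hsub w hc, hsub w hd, h⟩
      · have hvg : v ∈ g w := (hmemg w v).mpr (Or.inr ⟨rfl, hc⟩)
        exact ReflTransGen.head ⟨hsub w hc, hvg, hvx.symm⟩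
          (ReflTransGen.single ⟨hvg, hsub w hd, h⟩)
      · have hvg : v ∈ g w := (hmemg w v).mpr (Or.inr ⟨rfl, hd⟩)
        exact ReflTransGen.head ⟨hsub w hc, hvg, h.symm⟩
          (ReflTransGen.single ⟨hvg, hsub w hd, hvx⟩)
    intro a ha b hb
    rcases (hmemg w a).mp ha with ha' | ⟨rfl, hax⟩
    · rcases (hmemg w b).mp hb with hb' | ⟨rfl, hbx⟩
      · exact hmain a ha' b hb'
      · exact (hmain a ha' x hbx).trans (ReflTransGen.single ⟨hsub w hbx, hb, hvx.symm⟩)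
    · rcases (hmemg w b).mp hb with hb' | ⟨rfl, hbx⟩
      · exact ReflTransGen.head ⟨ha, hsub w hax, hvx⟩ (hmain x hax b hb')
      · exact ReflTransGen.refl
  · intro w₁ w₂ hw
    rw [Set.disjoint_left]
    intro u hu₁ hu₂
    rcases (hmemg w₁ u).mp hu₁ with h1 | ⟨rfl, h1⟩
    · rcases (hmemg w₂ u).mp hu₂ with h2 | ⟨rfl, h2⟩
      · exact (hdisj w₁ w₂ hw).ne_of_mem h1 h2 rfl
      · exact hv_not w₁ h1
    · rcases (hmemg w₂ u).mp hu₂ with h2 | ⟨-, h2⟩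
      · exact hv_not w₂ h2
      · exact (hdisj w₁ w₂ hw).ne_of_mem h1 h2 rfl
  · intro w₁ w₂ hw
    obtain ⟨a, ha, b, hb, hab⟩ := hadj w₁ w₂ hw
    rcases hab.2.2.2 with h | ⟨rfl, h⟩ | ⟨rfl, h⟩
    · exact ⟨a, hsub w₁ ha, b, hsub w₂ hb, h⟩
    · exact ⟨v, (hmemg w₁ v).mpr (Or.inr ⟨rfl, ha⟩), b, hsub w₂ hb, h⟩
    · exact ⟨a, hsub w₁ ha, v, (hmemg w₂ v).mpr (Or.inr ⟨rfl, hb⟩), h.symm⟩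

lemma density_aux : ∀ (n : ℕ) {W : Type*} [Fintype W] (H : SimpleGraph W)
    (_ : ¬ HasMinor H K23G),
    H.edgeSet.ncard ≤ n → H.edgeSet.ncard ≤ 3 * H.support.ncard := by
  intro n
  induction n with
  | zero => intro W _ H _ hn; exact hn.trans (Nat.zero_le _)
  | succ n ih =>
    intro W _ H hgood hn
    classical
    by_cases hE : H.edgeSet = ∅
    · rw [hE]; simp
    · obtain ⟨e, he⟩ := Set.nonempty_iff_ne_empty.mpr hE
      obtain ⟨v, x, rfl⟩ : ∃ v x, e = s(v, x) := by
        refine Sym2.ind (fun v x => ⟨v, x, rfl⟩) e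
      rw [SimpleGraph.mem_edgeSet] at he
      have hvx : H.Adj v x := he
      set H' := contractAux H v x with hH'def
      set E1 : Set (Sym2 W) := {e | e ∈ H.edgeSet ∧ v ∉ e} with hE1
      set Nv := H.neighborSet v with hNv
      set Nx := H.neighborSet x with hNx
      have hxNv : x ∈ Nv := hvx
      have cover1 : H.edgeSet ⊆ E1 ∪ (fun y => s(v, y)) '' Nv := by
        intro e he
        induction e with
        | _ a b =>
          rw [SimpleGraph.mem_edgeSet] at he
          by_cases hv : v ∈ s(a, b)
          · right
            rw [Sym2.mem_iff] at hv
            rcases hv with rfl | rfl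
            · exact ⟨b, he, rfl⟩
            · exact ⟨a, he.symm, Sym2.eq_swap⟩
          · exact Or.inl ⟨(H.mem_edgeSet).mpr he, hv⟩
      have lower1 : E1 ∪ ((fun y => s(v, y)) '' Nv) ⊆ H.edgeSet := by
        rintro e (he | ⟨y, hy, rfl⟩)
        · exact he.1
        · exact (H.mem_edgeSet).mpr hy
      have disj1 : Disjoint E1 ((fun y => s(v, y)) '' Nv) := by
        rw [Set.disjoint_left]
        rintro e ⟨-, hv⟩ ⟨y, hy, rfl⟩
        exact hv (Sym2.mem_mk_left v y)
      have injv : Set.InjOn (fun y => s(v, y)) Nv := by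
        intro y _ y' _ hyy'
        exact Sym2.congr_right.mp hyy'
      have m_le : H.edgeSet.ncard ≤ E1.ncard + Nv.ncard := by
        calc H.edgeSet.ncard ≤ (E1 ∪ (fun y => s(v, y)) '' Nv).ncard :=
              Set.ncard_le_ncard cover1 (Set.toFinite _)
        _ ≤ E1.ncard + ((fun y => s(v, y)) '' Nv).ncard := Set.ncard_union_le _ _
        _ ≤ E1.ncard + Nv.ncard := by
              gcongr
              exact Set.ncard_image_le (Set.toFinite _)
      have m_ge : E1.ncard + Nv.ncard ≤ H.edgeSet.ncard := by
        calc E1.ncard + Nv.ncard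
            = E1.ncard + ((fun y => s(v, y)) '' Nv).ncard := by
              rw [Set.ncard_image_of_injOn injv]
        _ = (E1 ∪ (fun y => s(v, y)) '' Nv).ncard := by
              rw [Set.ncard_union_eq disj1 (Set.toFinite _) (Set.toFinite _)]
        _ ≤ H.edgeSet.ncard := Set.ncard_le_ncard lower1 (Set.toFinite _)
      have cover2 : H'.edgeSet ⊆ E1 ∪ (fun y => s(x, y)) '' (Nv \ {x}) := by
        intro e he
        induction e with
        | _ a b =>
          rw [SimpleGraph.mem_edgeSet] at he
          obtain ⟨hne, hav, hbv, hcase⟩ := he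
          rcases hcase with h | ⟨rfl, h⟩ | ⟨rfl, h⟩
          · refine Or.inl ⟨(H.mem_edgeSet).mpr h, ?_⟩
            rw [Sym2.mem_iff]
            rintro (rfl | rfl)
            · exact hav rfl
            · exact hbv rfl
          · exact Or.inr ⟨b, ⟨h, fun hb => hne (hb ▸ rfl)⟩, rfl⟩
          · exact Or.inr ⟨a, ⟨h, fun ha => hne (ha ▸ rfl)⟩, Sym2.eq_swap⟩
      have lower2 : E1 ∪ ((fun y => s(x, y)) '' ((Nv \ {x}) \ Nx)) ⊆ H'.edgeSet := by
        rintro e (⟨he, hv⟩ | ⟨y, ⟨⟨hyNv, hyx⟩, hyNx⟩, rfl⟩)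
        · induction e with
          | _ a b =>
            rw [SimpleGraph.mem_edgeSet] at he ⊢
            refine ⟨he.ne, ?_, ?_, Or.inl he⟩
            · intro h; exact hv (h ▸ Sym2.mem_mk_left a b)
            · intro h; exact hv (h ▸ Sym2.mem_mk_right a b)
        · rw [SimpleGraph.mem_edgeSet]
          have hyx' : y ≠ x := by simpa using hyx
          refine ⟨fun h => hyx' h.symm, hvx.ne', (H.ne_of_adj hyNv).symm, ?_⟩
          exact Or.inr (Or.inl ⟨rfl, hyNv⟩)
      have disj2 : Disjoint E1 ((fun y => s(x, y)) '' ((Nv \ {x}) \ Nx)) := by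
        rw [Set.disjoint_left]
        rintro e ⟨he, -⟩ ⟨y, ⟨-, hyNx⟩, rfl⟩
        rw [SimpleGraph.mem_edgeSet] at he
        exact hyNx he
      have injx : ∀ (T : Set W), Set.InjOn (fun y => s(x, y)) T := by
        intro T y _ y' _ hyy'
        exact Sym2.congr_right.mp hyy'
      have m'_ge : E1.ncard + ((Nv \ {x}) \ Nx).ncard ≤ H'.edgeSet.ncard := by
        calc E1.ncard + ((Nv \ {x}) \ Nx).ncard
            = E1.ncard + ((fun y => s(x, y)) '' ((Nv \ {x}) \ Nx)).ncard := by
              rw [Set.ncard_image_of_injOn (injx _)]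
        _ = (E1 ∪ (fun y => s(x, y)) '' ((Nv \ {x}) \ Nx)).ncard := by
              rw [Set.ncard_union_eq disj2 (Set.toFinite _) (Set.toFinite _)]
        _ ≤ H'.edgeSet.ncard := Set.ncard_le_ncard lower2 (Set.toFinite _)
      have m'_le : H'.edgeSet.ncard ≤ E1.ncard + (Nv \ {x}).ncard := by
        calc H'.edgeSet.ncard ≤ (E1 ∪ (fun y => s(x, y)) '' (Nv \ {x})).ncard :=
              Set.ncard_le_ncard cover2 (Set.toFinite _)
        _ ≤ E1.ncard + ((fun y => s(x, y)) '' (Nv \ {x})).ncard := Set.ncard_union_le _ _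
        _ ≤ E1.ncard + (Nv \ {x}).ncard := by
              gcongr; exact Set.ncard_image_le (Set.toFinite _)
      have cnt3 : Nv.ncard ≤ ((Nv \ {x}) \ Nx).ncard + 3 := by
        have hsub : Nv \ ({x} ∪ (Nv ∩ Nx)) ⊆ (Nv \ {x}) \ Nx := by
          rintro y ⟨hyNv, hyT⟩
          refine ⟨⟨hyNv, fun h => hyT (Or.inl h)⟩, fun h => hyT (Or.inr ⟨hyNv, h⟩)⟩
        have hT : ({x} ∪ (Nv ∩ Nx) : Set W).ncard ≤ 3 := by
          calc ({x} ∪ (Nv ∩ Nx) : Set W).ncard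
              ≤ ({x} : Set W).ncard + (Nv ∩ Nx).ncard := Set.ncard_union_le _ _
          _ ≤ 1 + 2 := by
                gcongr
                · exact le_of_eq (Set.ncard_singleton x)
                · exact common_le_two hgood hvx.ne
        calc Nv.ncard ≤ (Nv \ ({x} ∪ (Nv ∩ Nx))).ncard + ({x} ∪ (Nv ∩ Nx)).ncard :=
              Set.ncard_le_ncard_diff_add_ncard _ _ (Set.toFinite _)
        _ ≤ ((Nv \ {x}) \ Nx).ncard + 3 :=
              Nat.add_le_add (Set.ncard_le_ncard hsub (Set.toFinite _)) hT
      have hsupp : H'.support ⊆ H.support \ {v} := by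
        rintro u ⟨b, hub⟩
        obtain ⟨hne, huv, hbv, hcase⟩ := hub
        refine ⟨?_, huv⟩
        rcases hcase with h | ⟨rfl, h⟩ | ⟨rfl, h⟩
        · exact ⟨b, h⟩
        · exact ⟨v, hvx.symm⟩
        · exact ⟨v, h.symm⟩
      have hvsupp : v ∈ H.support := ⟨x, hvx⟩
      have hsuppcard : H'.support.ncard + 1 ≤ H.support.ncard := by
        have h1 : H'.support.ncard ≤ (H.support \ {v}).ncard :=
          Set.ncard_le_ncard hsupp (Set.toFinite _)
        have h2 : (H.support \ {v}).ncard = H.support.ncard - 1 :=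
          Set.ncard_diff_singleton_of_mem hvsupp
        have h3 : 0 < H.support.ncard := (Set.ncard_pos (Set.toFinite _)).mpr ⟨v, hvsupp⟩
        omega
      have hxcard : (Nv \ {x}).ncard = Nv.ncard - 1 :=
        Set.ncard_diff_singleton_of_mem hxNv
      have hNv1 : 0 < Nv.ncard := (Set.ncard_pos (Set.toFinite _)).mpr ⟨x, hxNv⟩
      have hm'n : H'.edgeSet.ncard ≤ n := by omega
      have ihH' := ih H' (contract_no_K23 hvx hgood) hm'n
      omega

end density

set_option maxHeartbeats 1000000 in
/-- For every finite simple outerplanar graph `G` and every dominating set `S` of `G`,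
`|B_S(G)| ≤ 36·|S|` where `B_S(G) = V₄₊(G) \ S`. -/
theorem stmt_6 {V : Type*} [Fintype V] (G : SimpleGraph V) (hG : Outerplanar G)
    (S : Set V) (hS : IsDominatingSet G S) :
    (V4plus G \ S).ncard ≤ 36 * S.ncard := by
  classical
  obtain ⟨-, hK23⟩ := hG
  set B : Set V := V4plus G \ S with hB
  have hdom : ∀ v, v ∉ S → ∃ u, u ∈ S ∧ G.Adj u v := by
    intro v hv
    obtain ⟨u, hu, ha⟩ := hS v hv
    exact ⟨u, hu, ha⟩
  obtain ⟨σ, hσid, hσS, hσadj⟩ : ∃ σ : V → V,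
      (∀ v, v ∈ S → σ v = v) ∧ (∀ v, σ v ∈ S) ∧ (∀ v, v ∉ S → G.Adj (σ v) v) := by
    refine ⟨fun v => if h : v ∈ S then v else (hdom v h).choose, ?_, ?_, ?_⟩
    · intro v h; simp [h]
    · intro v
      by_cases h : v ∈ S
      · simpa [h]
      · simpa [h] using ((hdom v h).choose_spec).1
    · intro v h
      simpa [h] using ((hdom v h).choose_spec).2
  have hCN : ∀ {a b : V}, a ≠ b → ((G.neighborSet a) ∩ (G.neighborSet b)).ncard ≤ 2 :=
    fun {a b} h => common_le_two hK23 h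
  -- the pattern graph M on S obtained by contracting the dominating stars
  let M : SimpleGraph S :=
  { Adj := fun s t => s ≠ t ∧ ∃ a b : V, σ a = ↑s ∧ σ b = ↑t ∧ G.Adj a b
    symm := by
      constructor
      rintro s t ⟨hst, a, b, ha, hb, hab⟩
      exact ⟨hst.symm, b, a, hb, ha, hab.symm⟩
    loopless := ⟨fun s h => h.1 rfl⟩ }
  have hMadj : ∀ s t : S, M.Adj s t ↔
      (s ≠ t ∧ ∃ a b : V, σ a = ↑s ∧ σ b = ↑t ∧ G.Adj a b) := fun s t => Iff.rfl
  -- M is K23-minor-free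
  have hMfree : ¬ HasMinor M K23G := by
    rintro ⟨g, hne, hconn, hdisj, hadj⟩
    apply hK23
    set F : Sum (Fin 2) (Fin 3) → Set V := fun w => {v | ∃ s ∈ g w, σ v = ↑s} with hF
    have hFs : ∀ w (s : S), s ∈ g w → (↑s : V) ∈ F w := by
      intro w s hs; exact ⟨s, hs, hσid _ s.2⟩
    refine ⟨F, ?_, ?_, ?_, ?_⟩
    · intro w; obtain ⟨s, hs⟩ := hne w; exact ⟨↑s, hFs w s hs⟩
    · intro w
      rw [induce_connected_iff]
      obtain ⟨s0, hs0⟩ := hne w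
      refine ⟨⟨↑s0, hFs w s0 hs0⟩, ?_⟩
      have hstar : ∀ v ∈ F w, σ v ∈ F w ∧ ReflTransGen (StepRel G (F w)) v (σ v) := by
        intro v hv
        obtain ⟨s, hs, hσv⟩ := hv
        have h1 : σ v ∈ F w := ⟨s, hs, by rw [hσv]; exact hσid _ s.2⟩
        by_cases hvS : v ∈ S
        · rw [hσid v hvS] at h1 ⊢
          exact ⟨h1, ReflTransGen.refl⟩
        · exact ⟨h1, ReflTransGen.single ⟨⟨s, hs, hσv⟩, h1, (hσadj v hvS).symm⟩⟩
      have hRsymm : ∀ {x y : V}, ReflTransGen (StepRel G (F w)) x y → ReflTransGen (StepRel G (F w)) y x :=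
          fun h => (@Relation.ReflTransGen.stdSymm _ _ ⟨fun _ _ h' => stepRel_symm (G := G) (F w) h'⟩).symm _ _ h
      have hkey : ∀ (s t : S), s ∈ g w → t ∈ g w →
          ReflTransGen (StepRel G (F w)) ↑s ↑t := by
        intro s t hs ht
        have hMst := (induce_connected_iff.mp (hconn w)).2 s hs t ht
        have hgen : ∀ (t' : S), ReflTransGen (StepRel M (g w)) s t' →
            ReflTransGen (StepRel G (F w)) ↑s ↑t' := by
          intro t' h
          induction h with
          | refl => exact ReflTransGen.refl
          | @tail c d hsc hcd ih =>
            obtain ⟨hne', a, b, ha, hb, hab⟩ := hcd.2.2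
            have haF : a ∈ F w := ⟨c, hcd.1, ha⟩
            have hbF : b ∈ F w := ⟨d, hcd.2.1, hb⟩
            have h1 : ReflTransGen (StepRel G (F w)) ↑c a := by
              have := (hstar a haF).2
              rw [ha] at this
              exact hRsymm this
            have h2 : ReflTransGen (StepRel G (F w)) b ↑d := by
              have := (hstar b hbF).2
              rwa [hb] at this
            exact (ih.trans h1).trans (ReflTransGen.head ⟨haF, hbF, hab⟩ h2)
        exact hgen t hMst
      intro a ha b hb
      obtain ⟨s, hs, hσa⟩ := ha
      obtain ⟨t, ht, hσb⟩ := hb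
      have h1 := (hstar a (⟨s, hs, hσa⟩ : a ∈ F w)).2
      have h2 := (hstar b (⟨t, ht, hσb⟩ : b ∈ F w)).2
      rw [hσa] at h1
      rw [hσb] at h2
      exact (h1.trans (hkey s t hs ht)).trans (hRsymm h2)
    · intro w₁ w₂ hw
      rw [Set.disjoint_left]
      rintro v ⟨s, hs, hσv⟩ ⟨t, ht, hσv'⟩
      have hst : s = t := Subtype.coe_injective (hσv.symm.trans hσv')
      exact (hdisj w₁ w₂ hw).ne_of_mem hs ht hst
    · intro w₁ w₂ hw
      obtain ⟨s, hs, t, ht, hst⟩ := hadj w₁ w₂ hw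
      obtain ⟨hne', a, b, ha, hb, hab⟩ := hst
      exact ⟨a, ⟨s, hs, ha⟩, b, ⟨t, ht, hb⟩, hab⟩
  -- density of M
  have hMdens : M.edgeSet.ncard ≤ 3 * M.support.ncard :=
    density_aux M.edgeSet.ncard M hMfree le_rfl
  have hsuppcard : M.support.ncard ≤ S.ncard := by
    have h1 : M.support.ncard ≤ (Set.univ : Set S).ncard :=
      Set.ncard_le_ncard (Set.subset_univ _) (Set.toFinite _)
    rwa [Set.ncard_univ, Nat.card_coe_set_eq] at h1
  -- ordered edges of M
  set OE : Set (S × S) := {p | M.Adj p.1 p.2} with hOE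
  have hOEcard : OE.ncard ≤ 2 * M.edgeSet.ncard := by
    apply ncard_le_mul_of_fibers OE M.edgeSet (fun p => s(p.1, p.2)) 2
      (Set.toFinite _) (Set.toFinite _)
    · intro p hp
      exact (M.mem_edgeSet).mpr hp
    · intro e he
      induction e with
      | _ u v =>
        have hsub : OE ∩ (fun p : S × S => s(p.1, p.2)) ⁻¹' {s(u, v)} ⊆
            {(u, v), (v, u)} := by
          rintro ⟨p1, p2⟩ ⟨hp, hpe⟩
          simp only [Set.mem_preimage, Set.mem_singleton_iff] at hpe
          rw [Sym2.eq_iff] at hpe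
          rcases hpe with ⟨rfl, rfl⟩ | ⟨rfl, rfl⟩
          · exact Or.inl rfl
          · exact Or.inr rfl
        calc (OE ∩ (fun p : S × S => s(p.1, p.2)) ⁻¹' {s(u, v)}).ncard
            ≤ ({(u, v), (v, u)} : Set (S × S)).ncard :=
              Set.ncard_le_ncard hsub (Set.toFinite _)
          _ ≤ ({(v, u)} : Set (S × S)).ncard + 1 := Set.ncard_insert_le _ _
          _ ≤ 2 := by simp
  -- witnesses
  set Wb : V → Set V := fun b => G.neighborSet b \ (insert (σ b) (G.neighborSet (σ b)))
    with hWbdef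
  have hWbne : ∀ b ∈ B, (Wb b).Nonempty := by
    rintro b ⟨hb4, hbS⟩
    have hb4' : 4 ≤ (G.neighborSet b).ncard := hb4
    rw [Set.nonempty_iff_ne_empty]
    intro hemp
    have hbadj : G.Adj (σ b) b := hσadj b hbS
    have hsubT : G.neighborSet b ⊆ insert (σ b) (G.neighborSet b ∩ G.neighborSet (σ b)) := by
      intro u hu
      have hu2 : u ∈ insert (σ b) (G.neighborSet (σ b)) := by
        by_contra hcon
        exact (Set.eq_empty_iff_forall_notMem.mp hemp u) ⟨hu, hcon⟩
      rcases hu2 with h | h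
      · exact Or.inl h
      · exact Or.inr ⟨hu, h⟩
    have hcn : ((G.neighborSet b) ∩ (G.neighborSet (σ b))).ncard ≤ 2 := hCN hbadj.ne'
    have : (G.neighborSet b).ncard ≤ 3 := by
      calc (G.neighborSet b).ncard
          ≤ (insert (σ b) (G.neighborSet b ∩ G.neighborSet (σ b))).ncard :=
            Set.ncard_le_ncard hsubT (Set.toFinite _)
        _ ≤ (G.neighborSet b ∩ G.neighborSet (σ b)).ncard + 1 := Set.ncard_insert_le _ _
        _ ≤ 3 := by omega
    omega
  obtain ⟨wit, hwitW⟩ : ∃ wit : V → V, ∀ b ∈ B, wit b ∈ Wb b := by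
    refine ⟨fun b => if h : (Wb b).Nonempty then h.choose else b, ?_⟩
    intro b hb
    show (if h : (Wb b).Nonempty then h.choose else b) ∈ Wb b
    rw [dif_pos (hWbne b hb)]
    exact (hWbne b hb).choose_spec
  -- basic facts
  have hfacts : ∀ b ∈ B, G.Adj b (wit b) ∧ wit b ≠ σ b ∧ ¬ G.Adj (σ b) (wit b) ∧
      σ (wit b) ≠ σ b := by
    intro b hb
    obtain ⟨hw1, hw2⟩ := hwitW b hb
    have hwσ : wit b ≠ σ b := fun h => hw2 (Or.inl h)
    have hwadj : ¬ G.Adj (σ b) (wit b) := fun h => hw2 (Or.inr h)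
    refine ⟨hw1, hwσ, hwadj, ?_⟩
    by_cases hwS : wit b ∈ S
    · rw [hσid _ hwS]; exact hwσ
    · intro h
      exact hwadj (h ▸ hσadj (wit b) hwS)
  set Φ : V → S × S := fun b => (⟨σ b, hσS b⟩, ⟨σ (wit b), hσS _⟩) with hΦdef
  have hΦOE : ∀ b ∈ B, Φ b ∈ OE := by
    intro b hb
    obtain ⟨h1, h2, h3, h4⟩ := hfacts b hb
    refine ⟨fun h => h4 (congrArg Subtype.val h).symm, b, wit b, rfl, rfl, h1⟩
  -- fiber bound
  have hfib : ∀ p ∈ OE, (B ∩ Φ ⁻¹' {p}).ncard ≤ 6 := by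
    rintro ⟨s, t⟩ hp
    set Fib : Set V := B ∩ Φ ⁻¹' {(s, t)} with hFibdef
    have hFibfact : ∀ b ∈ Fib, b ∈ B ∧ σ b = ↑s ∧ σ (wit b) = ↑t := by
      rintro b ⟨hbB, hbp⟩
      have h1 : Φ b = (s, t) := hbp
      exact ⟨hbB, congrArg (fun q : S × S => (q.1 : V)) h1,
        congrArg (fun q : S × S => (q.2 : V)) h1⟩
    rcases Set.eq_empty_or_nonempty Fib with hFem | ⟨b0, hb0⟩
    · rw [hFem]; simp
    · obtain ⟨hb0B, hb0s, hb0t⟩ := hFibfact b0 hb0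
      have hst : (↑s : V) ≠ ↑t := by
        intro h
        exact (hfacts b0 hb0B).2.2.2 (hb0t.trans (h.symm.trans hb0s.symm))
      have hadjS : ∀ b ∈ Fib, G.Adj ↑s b := by
        intro b hbF
        obtain ⟨hbB, hbs, hbt⟩ := hFibfact b hbF
        have := hσadj b hbB.2
        rwa [hbs] at this
      -- rich part
      have hRich : (Fib ∩ {b | wit b ∈ S}).ncard ≤ 2 := by
        have hsub : Fib ∩ {b | wit b ∈ S} ⊆ G.neighborSet ↑s ∩ G.neighborSet ↑t := by
          rintro b ⟨hbF, hbw⟩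
          obtain ⟨hbB, hbs, hbt⟩ := hFibfact b hbF
          have hwt : wit b = ↑t := by
            rw [hσid _ hbw] at hbt
            exact hbt
          refine ⟨hadjS b hbF, ?_⟩
          have := (hfacts b hbB).1
          rw [hwt] at this
          exact this.symm
        exact le_trans (Set.ncard_le_ncard hsub (Set.toFinite _)) (hCN hst)
      -- poor part
      set P : Set V := Fib ∩ {b | wit b ∉ S} with hPdef
      have hbs : ∀ b ∈ P, σ b = ↑s ∧ σ (wit b) = ↑t ∧ b ∈ B ∧ wit b ∉ S ∧
          G.Adj b (wit b) ∧ G.Adj ↑s b ∧ G.Adj ↑t (wit b) ∧ b ∉ S := by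
        rintro b ⟨hbF, hbw⟩
        obtain ⟨hbB, h1, h2⟩ := hFibfact b hbF
        refine ⟨h1, h2, hbB, hbw, (hfacts b hbB).1, hadjS b hbF, ?_, hbB.2⟩
        have := hσadj (wit b) hbw
        rwa [h2] at this
      have hPoor : P.ncard ≤ 4 := by
        have himg : (wit '' P).ncard ≤ 2 := by
          by_contra hcon
          push_neg at hcon
          obtain ⟨t3, ht3s, ht3c⟩ := Set.exists_subset_card_eq (show 3 ≤ _ from hcon)
          obtain ⟨w1, w2, w3, h12, h13, h23, rfl⟩ := Set.ncard_eq_three.mp ht3c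
          obtain ⟨b1, hb1P, hw1⟩ := ht3s (show w1 ∈ ({w1, w2, w3} : Set V) by simp)
          obtain ⟨b2, hb2P, hw2⟩ := ht3s (show w2 ∈ ({w1, w2, w3} : Set V) by simp)
          obtain ⟨b3, hb3P, hw3⟩ := ht3s (show w3 ∈ ({w1, w2, w3} : Set V) by simp)
          obtain ⟨hs1, ht1, hB1, hw1S, hadj1, hGs1, hGt1, hb1S⟩ := hbs b1 hb1P
          obtain ⟨hs2, ht2, hB2, hw2S, hadj2, hGs2, hGt2, hb2S⟩ := hbs b2 hb2P
          obtain ⟨hs3, ht3, hB3, hw3S, hadj3, hGs3, hGt3, hb3S⟩ := hbs b3 hb3P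
          rw [hw1] at ht1 hw1S hadj1 hGt1
          rw [hw2] at ht2 hw2S hadj2 hGt2
          rw [hw3] at ht3 hw3S hadj3 hGt3
          -- all distinctness facts
          have hb12 : b1 ≠ b2 := fun h => h12 (hw1 ▸ hw2 ▸ h ▸ rfl)
          have hb13 : b1 ≠ b3 := fun h => h13 (hw1 ▸ hw3 ▸ h ▸ rfl)
          have hb23 : b2 ≠ b3 := fun h => h23 (hw2 ▸ hw3 ▸ h ▸ rfl)
          have hbw' : ∀ (bi wj : V), σ bi = ↑s → σ wj = ↑t → bi ≠ wj := by
            intro bi wj hbi hwj h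
            exact hst ((hbi.symm.trans (h ▸ hwj)))
          apply hK23
          apply k23_of (↑s) (↑t)
            (fun i => if i = 0 then {b1, w1} else if i = 1 then {b2, w2} else {b3, w3}) hst
          · intro i
            by_cases h0 : i = 0
            · simp [h0]
            · by_cases h1 : i = 1 <;> simp [h0, h1]
          · intro i
            by_cases h0 : i = 0
            · rw [show (if i = 0 then ({b1, w1} : Set V) else if i = 1 then {b2, w2}
                  else {b3, w3}) = {b1, w1} by simp [h0]]
              exact connected_induce_pair hadj1
            · by_cases h1 : i = 1
              · rw [show (if i = 0 then ({b1, w1} : Set V) else if i = 1 then {b2, w2}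
                    else {b3, w3}) = {b2, w2} by simp [h0, h1]]
                exact connected_induce_pair hadj2
              · rw [show (if i = 0 then ({b1, w1} : Set V) else if i = 1 then {b2, w2}
                    else {b3, w3}) = {b3, w3} by simp [h0, h1]]
                exact connected_induce_pair hadj3
          · intro i j hij
            have key : ∀ (a1 c1 a2 c2 : V), a1 ≠ a2 → a1 ≠ c2 → c1 ≠ a2 → c1 ≠ c2 →
                Disjoint ({a1, c1} : Set V) ({a2, c2} : Set V) := by
              intro a1 c1 a2 c2 k1 k2 k3 k4
              rw [Set.disjoint_iff_forall_ne]
              rintro x (rfl | rfl) y (rfl | rfl)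
              · exact k1
              · exact k2
              · exact k3
              · exact k4
            have hw12 : w1 ≠ w2 := h12
            have hw13 : w1 ≠ w3 := h13
            have hw23 : w2 ≠ w3 := h23
            fin_cases i <;> fin_cases j <;> simp only [Fin.isValue] <;>
              first
                | (exact absurd rfl hij)
                | (refine key _ _ _ _ ?_ ?_ ?_ ?_) <;>
                  first
                    | assumption
                    | (exact hbw' _ _ (by assumption) (by assumption))
                    | (exact (hbw' _ _ (by assumption) (by assumption)).symm)
                    | (exact Ne.symm (by assumption))
          · intro i
            have hsS : (↑s : V) ∈ S := Subtype.mem s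
            by_cases h0 : i = 0
            · rw [show (if i = 0 then ({b1, w1} : Set V) else if i = 1 then {b2, w2}
                  else {b3, w3}) = {b1, w1} by simp [h0]]
              rintro (rfl | rfl)
              · exact hb1S hsS
              · exact hw1S hsS
            · by_cases h1 : i = 1
              · rw [show (if i = 0 then ({b1, w1} : Set V) else if i = 1 then {b2, w2}
                    else {b3, w3}) = {b2, w2} by simp [h0, h1]]
                rintro (rfl | rfl)
                · exact hb2S hsS
                · exact hw2S hsS
              · rw [show (if i = 0 then ({b1, w1} : Set V) else if i = 1 then {b2, w2}
                    else {b3, w3}) = {b3, w3} by simp [h0, h1]]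
                rintro (rfl | rfl)
                · exact hb3S hsS
                · exact hw3S hsS
          · intro i
            have htS : (↑t : V) ∈ S := Subtype.mem t
            by_cases h0 : i = 0
            · rw [show (if i = 0 then ({b1, w1} : Set V) else if i = 1 then {b2, w2}
                  else {b3, w3}) = {b1, w1} by simp [h0]]
              rintro (rfl | rfl)
              · exact hb1S htS
              · exact hw1S htS
            · by_cases h1 : i = 1
              · rw [show (if i = 0 then ({b1, w1} : Set V) else if i = 1 then {b2, w2}
                    else {b3, w3}) = {b2, w2} by simp [h0, h1]]
                rintro (rfl | rfl)
                · exact hb2S htS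
                · exact hw2S htS
              · rw [show (if i = 0 then ({b1, w1} : Set V) else if i = 1 then {b2, w2}
                    else {b3, w3}) = {b3, w3} by simp [h0, h1]]
                rintro (rfl | rfl)
                · exact hb3S htS
                · exact hw3S htS
          · intro i
            by_cases h0 : i = 0
            · exact ⟨b1, by simp [h0], hGs1⟩
            · by_cases h1 : i = 1
              · exact ⟨b2, by simp [h0, h1], hGs2⟩
              · exact ⟨b3, by simp [h0, h1], hGs3⟩
          · intro i
            by_cases h0 : i = 0
            · exact ⟨w1, by simp [h0], hGt1⟩
            · by_cases h1 : i = 1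
              · exact ⟨w2, by simp [h0, h1], hGt2⟩
              · exact ⟨w3, by simp [h0, h1], hGt3⟩
        have hPfib : ∀ w ∈ wit '' P, (P ∩ wit ⁻¹' {w}).ncard ≤ 2 := by
          rintro w ⟨bw, hbwP, rfl⟩
          obtain ⟨hbws, hbwt, hbwB, hbwS, -⟩ := hbs bw hbwP
          have hsw : (↑s : V) ≠ wit bw := by
            intro h
            apply hst
            rw [← hbwt, ← h, hσid _ (Subtype.mem s)]
          have hsub : P ∩ wit ⁻¹' {wit bw} ⊆ G.neighborSet ↑s ∩ G.neighborSet (wit bw) := by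
            rintro b ⟨hbP', hbeq⟩
            simp only [Set.mem_preimage, Set.mem_singleton_iff] at hbeq
            obtain ⟨-, -, -, -, hbadj, hbGs, -⟩ := hbs b hbP'
            refine ⟨hbGs, ?_⟩
            rw [hbeq] at hbadj
            exact hbadj.symm
          exact le_trans (Set.ncard_le_ncard hsub (Set.toFinite _)) (hCN hsw)
        calc P.ncard ≤ 2 * (wit '' P).ncard :=
              ncard_le_mul_of_fibers P (wit '' P) wit 2 (Set.toFinite _) (Set.toFinite _)
                (fun b hb => ⟨b, hb, rfl⟩) hPfib
          _ ≤ 2 * 2 := by omega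
          _ = 4 := rfl
      have hcover : Fib ⊆ (Fib ∩ {b | wit b ∈ S}) ∪ P := by
        intro b hb
        by_cases h : wit b ∈ S
        · exact Or.inl ⟨hb, h⟩
        · exact Or.inr ⟨hb, h⟩
      calc Fib.ncard ≤ ((Fib ∩ {b | wit b ∈ S}) ∪ P).ncard :=
            Set.ncard_le_ncard hcover (Set.toFinite _)
        _ ≤ (Fib ∩ {b | wit b ∈ S}).ncard + P.ncard := Set.ncard_union_le _ _
        _ ≤ 6 := by omega
  have hBcount : B.ncard ≤ 6 * OE.ncard :=
    ncard_le_mul_of_fibers B OE Φ 6 (Set.toFinite _) (Set.toFinite _) hΦOE hfib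
  omega
end

section
/- Let G be a finite simple forest (a graph with no cycles) and let T be the set consisting of all vertices of degree at least 2 together with all vertices having no neighbor of degree at least 2. Then T is a dominating set of G, and for every dominating set S of G one has |T| ≤ 3·|S|. -/
namespace ForestAux

open scoped Classical

open SimpleGraph

variable {V : Type*}

noncomputable def groot (G : SimpleGraph V) (v : V) : V := (G.connectedComponentMk v).out

noncomputable def gdd (G : SimpleGraph V) (v : V) : ℕ := G.dist v (groot G v)

lemma reachable_groot (G : SimpleGraph V) (v : V) : G.Reachable v (groot G v) := by
  have h : G.connectedComponentMk (groot G v) = G.connectedComponentMk v := Quot.out_eq _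
  exact (SimpleGraph.ConnectedComponent.eq.mp h).symm

lemma groot_eq_of_adj (G : SimpleGraph V) {u v : V} (h : G.Adj u v) :
    groot G u = groot G v := by
  unfold groot
  rw [SimpleGraph.ConnectedComponent.eq.mpr h.reachable]

lemma gdd_ne_of_adj (G : SimpleGraph V) (hG : G.IsAcyclic) {u v : V} (h : G.Adj u v) :
    gdd G u ≠ gdd G v := by
  classical
  intro he
  obtain ⟨p, hp, hpl⟩ := (reachable_groot G u).exists_path_of_dist
  obtain ⟨q0, hq0, hq0l⟩ := (reachable_groot G v).exists_path_of_dist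
  have hrv : groot G v = groot G u := (groot_eq_of_adj G h).symm
  let q : G.Walk v (groot G u) := q0.copy rfl hrv
  have hqpath : q.IsPath := (q0.isPath_copy rfl hrv).mpr hq0
  have hql : q.length = gdd G v := by
    show (q0.copy rfl hrv).length = _
    rw [SimpleGraph.Walk.length_copy]; exact hq0l
  by_cases hu : u ∈ q.support
  · have hspec := q.take_spec hu
    have hlen : (q.takeUntil u hu).length + (q.dropUntil u hu).length = q.length := by
      have := congrArg SimpleGraph.Walk.length hspec
      rwa [SimpleGraph.Walk.length_append] at this
    have htpos : 0 < (q.takeUntil u hu).length := by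
      rcases Nat.eq_zero_or_pos (q.takeUntil u hu).length with h0 | h0
      · exact absurd (SimpleGraph.Walk.eq_of_length_eq_zero h0) h.ne'
      · exact h0
    have hd : G.dist u (groot G u) ≤ (q.dropUntil u hu).length := SimpleGraph.dist_le _
    have hgu : gdd G u = G.dist u (groot G u) := rfl
    omega
  · have hpath : (SimpleGraph.Walk.cons h q).IsPath := by
      rw [SimpleGraph.Walk.cons_isPath_iff]; exact ⟨hqpath, hu⟩
    have heq : p = SimpleGraph.Walk.cons h q := by
      have := isAcyclic_iff_path_unique.mp hG ⟨p, hp⟩ ⟨SimpleGraph.Walk.cons h q, hpath⟩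
      exact congrArg Subtype.val this
    have hlc := congrArg SimpleGraph.Walk.length heq
    rw [SimpleGraph.Walk.length_cons, hpl, hql] at hlc
    have hgu : gdd G u = G.dist u (groot G u) := rfl
    omega

lemma gdd_descend_unique (G : SimpleGraph V) (hG : G.IsAcyclic) {v u₁ u₂ : V}
    (h₁ : G.Adj v u₁) (h₂ : G.Adj v u₂)
    (hd₁ : gdd G u₁ < gdd G v) (hd₂ : gdd G u₂ < gdd G v) : u₁ = u₂ := by
  classical
  have key : ∀ {u : V} (h : G.Adj v u), gdd G u < gdd G v →
      ∃ (w : G.Walk v (groot G v)), w.IsPath ∧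
        w.support = v :: u :: w.support.tail.tail := by
    intro u h hd
    obtain ⟨p0, hp0, hp0l⟩ := (reachable_groot G u).exists_path_of_dist
    have hru : groot G u = groot G v := groot_eq_of_adj G h.symm
    let p : G.Walk u (groot G v) := p0.copy rfl hru
    have hppath : p.IsPath := (p0.isPath_copy rfl hru).mpr hp0
    have hpl : p.length = gdd G u := by
      show (p0.copy rfl hru).length = _
      rw [SimpleGraph.Walk.length_copy]
      rw [hp0l]; unfold gdd; rw [hru]
    have hv : v ∉ p.support := by
      intro hv
      have hspec := p.take_spec hv
      have hlen : (p.takeUntil v hv).length + (p.dropUntil v hv).length = p.length := by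
        have := congrArg SimpleGraph.Walk.length hspec
        rwa [SimpleGraph.Walk.length_append] at this
      have hd' : G.dist v (groot G v) ≤ (p.dropUntil v hv).length := SimpleGraph.dist_le _
      have hgv : gdd G v = G.dist v (groot G v) := rfl
      omega
    refine ⟨SimpleGraph.Walk.cons h p, ?_, ?_⟩
    · rw [SimpleGraph.Walk.cons_isPath_iff]; exact ⟨hppath, hv⟩
    · rw [SimpleGraph.Walk.support_cons]
      rw [p.support_eq_cons]
      simp
  obtain ⟨w₁, hw₁, hs₁⟩ := key h₁ hd₁
  obtain ⟨w₂, hw₂, hs₂⟩ := key h₂ hd₂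
  have : w₁ = w₂ := by
    have := isAcyclic_iff_path_unique.mp hG ⟨w₁, hw₁⟩ ⟨w₂, hw₂⟩
    exact congrArg Subtype.val this
  rw [this, hs₂] at hs₁
  exact (List.cons.injEq _ _ _ _ ▸ hs₁).2 |> fun h' => by
    injection hs₁ with _ h''
    injection h'' with h3 _
    exact h3.symm ▸ rfl

noncomputable def gphi (G : SimpleGraph V) (e : Sym2 V) : V :=
  if gdd G e.out.1 < gdd G e.out.2 then e.out.2 else e.out.1

lemma gphi_mem (G : SimpleGraph V) (e : Sym2 V) : gphi G e ∈ e := by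
  unfold gphi
  split
  · exact Sym2.out_snd_mem e
  · exact Sym2.out_fst_mem e

lemma gphi_spec (G : SimpleGraph V) (hG : G.IsAcyclic) {e : Sym2 V} (he : e ∈ G.edgeSet) :
    ∃ u, e = s(u, gphi G e) ∧ G.Adj (gphi G e) u ∧ gdd G u < gdd G (gphi G e) := by
  have hout : s((Quot.out e).1, (Quot.out e).2) = e := Quot.out_eq e
  have hmk : e = s(e.out.1, e.out.2) := by
    conv_lhs => rw [← hout]
  have hadj : G.Adj e.out.1 e.out.2 := by
    rw [← SimpleGraph.mem_edgeSet, ← hmk]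
    exact he
  have hne := gdd_ne_of_adj G hG hadj
  rcases lt_or_gt_of_ne hne with hlt | hgt
  · have hphi : gphi G e = e.out.2 := if_pos hlt
    rw [hphi]
    exact ⟨e.out.1, hmk, hadj.symm, hlt⟩
  · have hphi : gphi G e = e.out.1 := if_neg (by omega)
    rw [hphi]
    refine ⟨e.out.2, ?_, hadj, hgt⟩
    conv_lhs => rw [hmk]
    exact Sym2.eq_swap

lemma gphi_injOn (G : SimpleGraph V) (hG : G.IsAcyclic) :
    Set.InjOn (gphi G) G.edgeSet := by
  intro e₁ h₁ e₂ h₂ heq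
  obtain ⟨u₁, he₁, ha₁, hd₁⟩ := gphi_spec G hG h₁
  obtain ⟨u₂, he₂, ha₂, hd₂⟩ := gphi_spec G hG h₂
  rw [heq] at he₁ ha₁ hd₁
  have h12 : u₁ = u₂ := gdd_descend_unique G hG ha₁ ha₂ hd₁ hd₂
  subst h12
  exact he₁.trans he₂.symm

lemma exists_D [Fintype V] (G : SimpleGraph V) (S : Set V)
    (hS : ∀ v ∉ S, ∃ u ∈ S, G.Adj u v) (Small : Set V)
    (hclosed : ∀ v ∈ Small, ∀ u, G.Adj v u → u ∈ Small)
    (hsub : ∀ v ∈ Small, (G.neighborSet v).Subsingleton) :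
    ∃ D : V → V, (∀ v, D v ∈ S) ∧ (∀ v, D v = v ∨ G.Adj v (D v)) ∧
      (∀ v, D (D v) = D v) ∧ (∀ u v, G.Adj u v → v ∈ Small → D u = D v) ∧
      (∀ v ∈ Small, D v ∈ Small) := by
  classical
  letI : LinearOrder V := LinearOrder.lift' (Fintype.equivFin V) (Fintype.equivFin V).injective
  -- the canonical S-element of the closed neighborhood, for Small vertices
  set K : V → Set V := fun v => insert v (G.neighborSet v) with hK
  have hKS : ∀ v, (K v ∩ S).Nonempty := by
    intro v
    by_cases hv : v ∈ S
    · exact ⟨v, Set.mem_insert v _, hv⟩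
    · obtain ⟨u, hu, hadj⟩ := hS v hv
      exact ⟨u, Set.mem_insert_of_mem _ hadj.symm, hu⟩
  set m : V → V := fun v => ((K v ∩ S).toFinite.toFinset.min'
      ((Set.Finite.toFinset_nonempty _).mpr (hKS v))) with hm
  have hm_mem : ∀ v, m v ∈ K v ∩ S := by
    intro v
    have := Finset.min'_mem ((K v ∩ S).toFinite.toFinset)
      ((Set.Finite.toFinset_nonempty _).mpr (hKS v))
    rwa [Set.Finite.mem_toFinset] at this
  have hm_congr : ∀ u v, K u = K v → m u = m v := by
    intro u v huv
    have h1 : m u ∈ (K v ∩ S) := by rw [← huv]; exact hm_mem u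
    have h2 : m v ∈ (K u ∩ S) := by rw [huv]; exact hm_mem v
    exact le_antisymm (Finset.min'_le _ _ (by rwa [Set.Finite.mem_toFinset]))
      (Finset.min'_le _ _ (by rwa [Set.Finite.mem_toFinset]))
  -- K is constant on adjacent Small pairs
  have hKeq : ∀ u v, u ∈ Small → G.Adj u v → K u = K v := by
    intro u v hu hadj
    have hv : v ∈ Small := hclosed u hu v hadj
    have hNu : G.neighborSet u = {v} := by
      apply Set.eq_singleton_iff_unique_mem.mpr
      exact ⟨hadj, fun w hw => hsub u hu hw hadj⟩
    have hNv : G.neighborSet v = {u} := by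
      apply Set.eq_singleton_iff_unique_mem.mpr
      exact ⟨hadj.symm, fun w hw => hsub v hv hw hadj.symm⟩
    rw [hK]
    simp only [hNu, hNv]
    exact Set.pair_comm u v
  set D : V → V := fun v =>
    if v ∈ Small then m v else if v ∈ S then v else
      if h : ∃ u ∈ S, G.Adj u v then h.choose else v
    with hD
  have hDsmall : ∀ v ∈ Small, D v = m v := fun v hv => if_pos hv
  have hDS : ∀ v, D v ∈ S := by
    intro v
    by_cases hv : v ∈ Small
    · rw [hDsmall v hv]; exact (hm_mem v).2
    · by_cases hvS : v ∈ S
      · simpa [hD, hv, hvS]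
      · obtain ⟨u, hu, hadj⟩ := hS v hvS
        have hex : ∃ u ∈ S, G.Adj u v := ⟨u, hu, hadj⟩
        have : D v = hex.choose := by simp [hD, hv, hvS, hex]
        rw [this]
        exact hex.choose_spec.1
  have hDadj : ∀ v, D v = v ∨ G.Adj v (D v) := by
    intro v
    by_cases hv : v ∈ Small
    · rw [hDsmall v hv]
      rcases (hm_mem v).1 with h | h
      · left; exact h.symm ▸ rfl
      · right; exact h
    · by_cases hvS : v ∈ S
      · left; simpa [hD, hv, hvS]
      · obtain ⟨u, hu, hadj⟩ := hS v hvS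
        have hex : ∃ u ∈ S, G.Adj u v := ⟨u, hu, hadj⟩
        have : D v = hex.choose := by simp [hD, hv, hvS, hex]
        right; rw [this]
        exact hex.choose_spec.2.symm
  have hDsmall_mem : ∀ v ∈ Small, D v ∈ Small := by
    intro v hv
    rw [hDsmall v hv]
    rcases (hm_mem v).1 with h | h
    · rw [h]; exact hv
    · exact hclosed v hv _ h
  have hP4 : ∀ u v, G.Adj u v → v ∈ Small → D u = D v := by
    intro u v hadj hv
    have hu : u ∈ Small := hclosed v hv u hadj.symm
    rw [hDsmall u hu, hDsmall v hv]
    exact hm_congr u v (hKeq u v hu hadj)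
  have hP3 : ∀ v, D (D v) = D v := by
    intro v
    by_cases hv : v ∈ Small
    · rcases hDadj v with h | h
      · exact congrArg D h
      · exact hP4 (D v) v h.symm hv
    · by_cases hvS : v ∈ S
      · have h1 : D v = v := by simp [hD, hv, hvS]
        exact congrArg D h1
      · obtain ⟨u, hu, hadj⟩ := hS v hvS
        have hex : ∃ u ∈ S, G.Adj u v := ⟨u, hu, hadj⟩
        have h1 : D v = hex.choose := by simp [hD, hv, hvS, hex]
        have hcS : hex.choose ∈ S := hex.choose_spec.1
        have hcns : hex.choose ∉ Small := by
          intro hc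
          exact hv (hclosed _ hc v hex.choose_spec.2)
        rw [h1]
        simp [hD, hcns, hcS]
  exact ⟨D, hDS, hDadj, hP3, hP4, hDsmall_mem⟩

lemma ncard_eq_filter_card [Fintype V] (s : Set V) [DecidablePred (· ∈ s)] :
    s.ncard = (Finset.univ.filter (· ∈ s)).card := by
  rw [Set.ncard_eq_toFinset_card']
  apply Finset.card_nbij id (by intro x hx; simpa using hx) (by simp [Set.InjOn])
  · intro x hx
    simp at hx ⊢
    exact hx

lemma sym2_filter_card_le [Fintype V] (e : Sym2 V) [DecidablePred (· ∈ e)] :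
    (Finset.univ.filter (· ∈ e)).card ≤ 2 := by
  have hsub : Finset.univ.filter (· ∈ e) ⊆ {e.out.1, e.out.2} := by
    intro x hx
    simp only [Finset.mem_filter] at hx
    have hx2 : x ∈ s(e.out.1, e.out.2) := by
      have heq : s(e.out.1, e.out.2) = e := e.out_eq
      rw [heq]; exact hx.2
    rw [Sym2.mem_iff] at hx2
    simp [hx2]
  calc _ ≤ ({e.out.1, e.out.2} : Finset V).card := Finset.card_le_card hsub
    _ ≤ 2 := (Finset.card_insert_le _ _).trans (by simp)

end ForestAux

open ForestAux
open SimpleGraph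
open scoped Classical

/-- For a finite simple forest `G`, the set `T` of all vertices of degree at least 2
together with all vertices having no neighbor of degree at least 2 is a dominating
set, and `|T| ≤ 3·|S|` for every dominating set `S`. -/
theorem stmt_14 {V : Type*} [Fintype V] (G : SimpleGraph V) (hG : G.IsAcyclic) :
    IsDominatingSet G
      ({v : V | 2 ≤ (G.neighborSet v).ncard} ∪
        {v : V | ∀ u ∈ G.neighborSet v, ¬ 2 ≤ (G.neighborSet u).ncard}) ∧
    ∀ S : Set V, IsDominatingSet G S →
      ({v : V | 2 ≤ (G.neighborSet v).ncard} ∪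
        {v : V | ∀ u ∈ G.neighborSet v, ¬ 2 ≤ (G.neighborSet u).ncard}).ncard
        ≤ 3 * S.ncard := by
  constructor
  · -- domination
    intro v hv
    rw [Set.mem_union] at hv
    push_neg at hv
    obtain ⟨hv1, hv2⟩ := hv
    rw [Set.mem_setOf_eq] at hv2
    push_neg at hv2
    obtain ⟨u, hu, hdu⟩ := hv2
    exact ⟨u, Or.inl hdu, (hu : G.Adj v u).symm⟩
  · intro S hS
    set T : Set V := ({v : V | 2 ≤ (G.neighborSet v).ncard} ∪
        {v : V | ∀ u ∈ G.neighborSet v, ¬ 2 ≤ (G.neighborSet u).ncard}) with hT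
    set Small : Set V := {v | (G.neighborSet v).ncard ≤ 1 ∧
        ∀ u ∈ G.neighborSet v, (G.neighborSet u).ncard ≤ 1} with hSmdef
    have hsub : ∀ v ∈ Small, (G.neighborSet v).Subsingleton := by
      intro v hv a ha b hb
      exact (Set.ncard_le_one_iff (Set.toFinite _)).mp hv.1 ha hb
    have hclosed : ∀ v ∈ Small, ∀ u, G.Adj v u → u ∈ Small := by
      intro v hv u hadj
      have hdu : (G.neighborSet u).ncard ≤ 1 := hv.2 u hadj
      refine ⟨hdu, ?_⟩
      intro w hw
      have hwv : w = v := (Set.ncard_le_one_iff (Set.toFinite _)).mp hdu hw hadj.symm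
      rw [hwv]
      exact hv.1
    obtain ⟨D, hP1, hP2, hP3, hP4, hP5⟩ := exists_D G S hS Small hclosed hsub
    -- Finsets
    set Tf : Finset V := Finset.univ.filter (· ∈ T) with hTf
    set Af : Finset V := Finset.univ.filter (fun v => 2 ≤ (G.neighborSet v).ncard) with hAf
    set Smf : Finset V := Finset.univ.filter (· ∈ Small) with hSmf
    set Sf : Finset V := Finset.univ.filter (· ∈ S) with hSf
    set Fix1 : Finset V := Finset.univ.filter (fun v => D v = v ∧ v ∉ Small) with hFix1
    set Fix2 : Finset V := Finset.univ.filter (fun v => D v = v ∧ v ∈ Small) with hFix2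
    set Cf : Finset (Sym2 V) := G.edgeFinset.filter (fun e => ¬ (e.map D).IsDiag) with hCf
    -- vertices of A are not Small
    have hAnotSmall : ∀ v : V, 2 ≤ (G.neighborSet v).ncard → v ∉ Small := by
      intro v h2 hv
      have := hv.1
      omega
    -- step 0 : T count
    have step0 : Tf.card ≤ Af.card + Smf.card := by
      have hsubT : Tf ⊆ Af ∪ Smf := by
        intro v hv
        simp only [hTf, Finset.mem_filter, Finset.mem_univ, true_and] at hv
        rcases hv with hv | hv
        · refine Finset.mem_union_left _ ?_
          simp only [hAf, Finset.mem_filter, Finset.mem_univ, true_and]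
          exact hv
        · by_cases h2 : 2 ≤ (G.neighborSet v).ncard
          · exact Finset.mem_union_left _ (by simp [hAf, h2])
          · refine Finset.mem_union_right _ ?_
            simp only [hSmf, Finset.mem_filter, Finset.mem_univ, true_and]
            refine ⟨by omega, ?_⟩
            intro u hu
            have := hv u hu
            omega
      exact (Finset.card_le_card hsubT).trans (Finset.card_union_le _ _)
    -- step 1 : Small count
    have step1 : Smf.card ≤ 2 * Fix2.card := by
      apply Finset.card_le_mul_card_image_of_maps_to (f := D)
      · intro v hv
        simp only [hSmf, Finset.mem_filter, Finset.mem_univ, true_and] at hv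
        simp only [hFix2, Finset.mem_filter, Finset.mem_univ, true_and]
        exact ⟨hP3 v, hP5 v hv⟩
      · intro s hs
        simp only [hFix2, Finset.mem_filter, Finset.mem_univ, true_and] at hs
        have hsubf : Smf.filter (fun v => D v = s) ⊆
            insert s (Finset.univ.filter (· ∈ G.neighborSet s)) := by
          intro v hv
          simp only [Finset.mem_filter] at hv
          rcases hP2 v with h | h
          · rw [Finset.mem_insert]
            left
            rw [← hv.2, h]
          · rw [Finset.mem_insert]
            right
            rw [hv.2] at h
            simp only [Finset.mem_filter, Finset.mem_univ, true_and]
            exact h.symm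
        calc (Smf.filter (fun v => D v = s)).card
            ≤ (insert s (Finset.univ.filter (· ∈ G.neighborSet s))).card :=
              Finset.card_le_card hsubf
          _ ≤ (Finset.univ.filter (· ∈ G.neighborSet s)).card + 1 := Finset.card_insert_le _ _
          _ ≤ 2 := by
              have h1 := hs.2.1
              rw [ncard_eq_filter_card] at h1
              omega
    -- cross edge existence at non-fixed A vertices
    have hcross : ∀ v : V, 2 ≤ (G.neighborSet v).ncard → D v ≠ v →
        ∃ u, G.Adj v u ∧ D u ≠ D v := by
      intro v h2 hDv
      have hadj : G.Adj v (D v) := by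
        rcases hP2 v with h | h
        · exact absurd h hDv
        · exact h
      obtain ⟨u, hu, hne⟩ := Set.exists_ne_of_one_lt_ncard (s := G.neighborSet v) (by omega) (D v)
      refine ⟨u, hu, ?_⟩
      intro heq
      have huv : u ≠ v := (hu : G.Adj v u).ne'
      have hDu : D u ≠ u := by
        intro h
        rw [h] at heq
        exact hne heq
      have hadju : G.Adj u (D v) := by
        have := hP2 u
        rcases this with h | h
        · exact absurd h hDu
        · rw [heq] at h
          exact h
      -- two distinct paths u → D v : direct edge, and through v
      have hp2 : (SimpleGraph.Walk.cons (hu : G.Adj v u).symm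
          (SimpleGraph.Walk.cons hadj SimpleGraph.Walk.nil)).IsPath := by
        rw [SimpleGraph.Walk.isPath_def]
        simp only [SimpleGraph.Walk.support_cons, SimpleGraph.Walk.support_nil]
        simp [huv, hne, hadj.ne]
      have := isAcyclic_iff_path_unique.mp hG (SimpleGraph.Path.singleton hadju)
          ⟨_, hp2⟩
      have hlen := congrArg (fun p : G.Path u (D v) => p.val.length) this
      simp [SimpleGraph.Path.singleton] at hlen
    -- step 2 : A count, non-fixed part
    have step2 : (Af.filter (fun v => D v ≠ v)).card ≤ 2 * Cf.card := by
      set g : V → Sym2 V := fun v =>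
        if h : ∃ u, G.Adj v u ∧ D u ≠ D v then s(v, h.choose) else s(v, v) with hg
      have hgv : ∀ v, v ∈ g v := by
        intro v
        rw [hg]
        dsimp only
        split
        · exact Sym2.mem_mk_left _ _
        · exact Sym2.mem_mk_left _ _
      apply Finset.card_le_mul_card_image_of_maps_to (f := g)
      · intro v hv
        simp only [Finset.mem_filter, hAf, Finset.mem_univ, true_and] at hv
        obtain ⟨h2, hDv⟩ := hv
        have hex : ∃ u, G.Adj v u ∧ D u ≠ D v := hcross v h2 hDv
        have hgeq : g v = s(v, hex.choose) := dif_pos hex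
        simp only [hCf, Finset.mem_filter, hgeq]
        constructor
        · rw [SimpleGraph.mem_edgeFinset, SimpleGraph.mem_edgeSet]
          exact hex.choose_spec.1
        · rw [Sym2.map_pair_eq, Sym2.mk_isDiag_iff]
          exact fun h => hex.choose_spec.2 h.symm
      · intro e he
        have hsubf : (Af.filter (fun v => D v ≠ v)).filter (fun v => g v = e) ⊆
            Finset.univ.filter (· ∈ e) := by
          intro v hv
          simp only [Finset.mem_filter] at hv
          simp only [Finset.mem_filter, Finset.mem_univ, true_and]
          rw [← hv.2]
          exact hgv v
        exact (Finset.card_le_card hsubf).trans (sym2_filter_card_le e)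
    -- step 3 : Cf.card ≤ Fix1.card
    have step3 : Cf.card ≤ Fix1.card := by
      set V1f : Finset V := Finset.univ.filter (· ∉ Small) with hV1f
      set E1f : Finset (Sym2 V) := G.edgeFinset.filter (fun e => ∀ x ∈ e, x ∉ Small) with hE1f
      set Stf : Finset (Sym2 V) :=
        (V1f.filter (fun v => D v ≠ v)).image (fun v => s(v, D v)) with hStf
      have hCsub : Cf ⊆ E1f := by
        intro e he
        simp only [hCf, Finset.mem_filter] at he
        obtain ⟨hee, hcr⟩ := he
        simp only [hE1f, Finset.mem_filter]
        refine ⟨hee, ?_⟩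
        obtain ⟨a, b, rfl⟩ : ∃ a b : V, s(a, b) = e := ⟨(Quot.out e).1, (Quot.out e).2, Quot.out_eq e⟩
        have hadj : G.Adj a b := by
          rw [SimpleGraph.mem_edgeFinset, SimpleGraph.mem_edgeSet] at hee
          exact hee
        have hcr' : D a ≠ D b := by
          rw [Sym2.map_pair_eq, Sym2.mk_isDiag_iff] at hcr
          exact hcr
        intro x hx
        rw [Sym2.mem_iff] at hx
        rcases hx with rfl | rfl
        · intro hxS
          exact hcr' (hP4 b x hadj.symm hxS).symm
        · intro hxS
          exact hcr' (hP4 a x hadj hxS)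
      have hStsub : Stf ⊆ E1f := by
        intro e he
        simp only [hStf, Finset.mem_image] at he
        obtain ⟨v, hv, rfl⟩ := he
        simp only [Finset.mem_filter, hV1f, Finset.mem_univ, true_and] at hv
        obtain ⟨hvns, hDv⟩ := hv
        have hadj : G.Adj v (D v) := by
          rcases hP2 v with h | h
          · exact absurd h hDv
          · exact h
        simp only [hE1f, Finset.mem_filter]
        constructor
        · rw [SimpleGraph.mem_edgeFinset, SimpleGraph.mem_edgeSet]
          exact hadj
        · intro x hx
          rw [Sym2.mem_iff] at hx
          rcases hx with h | h
          · rw [h]; exact hvns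
          · rw [h]
            intro hxS
            exact hvns (hclosed _ hxS v hadj.symm)
      have hdisj : Disjoint Cf Stf := by
        rw [Finset.disjoint_right]
        intro e he
        simp only [hStf, Finset.mem_image] at he
        obtain ⟨v, hv, rfl⟩ := he
        simp only [hCf, Finset.mem_filter]
        intro hc
        apply hc.2
        rw [Sym2.map_pair_eq, hP3 v, Sym2.mk_isDiag_iff]
      have hStcard : Stf.card = (V1f.filter (fun v => D v ≠ v)).card := by
        rw [hStf]
        apply Finset.card_image_of_injOn
        intro v hv w hw heq
        simp only [Finset.mem_coe, Finset.mem_filter] at hv hw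
        dsimp only at heq
        replace heq := (Sym2.mk_eq_mk_iff (p := (v, D v)) (q := (w, D w))).mp heq
        rcases heq with h | h
        · exact congrArg Prod.fst h
        · have h1 : v = D w := congrArg Prod.fst h
          exfalso
          apply hv.2
          rw [h1, hP3 w, ← h1]
      have hunion : Cf.card + Stf.card ≤ E1f.card := by
        rw [← Finset.card_union_of_disjoint hdisj]
        exact Finset.card_le_card (Finset.union_subset hCsub hStsub)
      have hE1V1 : E1f.card ≤ V1f.card := by
        apply Finset.card_le_card_of_injOn (gphi G)
        · intro e he
          simp only [Finset.mem_coe, hE1f, Finset.mem_filter] at he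
          simp only [Finset.mem_coe, hV1f, Finset.mem_filter, Finset.mem_univ, true_and]
          exact he.2 _ (gphi_mem G e)
        · intro e₁ h₁ e₂ h₂ heq
          apply gphi_injOn G hG _ _ heq
          · simp only [Finset.mem_coe, hE1f, Finset.mem_filter] at h₁
            exact (SimpleGraph.mem_edgeFinset).mp h₁.1
          · simp only [Finset.mem_coe, hE1f, Finset.mem_filter] at h₂
            exact (SimpleGraph.mem_edgeFinset).mp h₂.1
      have hV1split : (V1f.filter (fun v => D v ≠ v)).card + Fix1.card = V1f.card := by
        have h1 : V1f.filter (fun v => D v = v) = Fix1 := by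
          ext v
          simp only [hV1f, hFix1, Finset.mem_filter, Finset.mem_univ, true_and]
          tauto
        have := Finset.card_filter_add_card_filter_not
          (s := V1f) (p := fun v => D v = v)
        rw [h1] at this
        simp only [ne_eq]
        omega
      omega
    -- step 4 : fixed part of A
    have step4 : (Af.filter (fun v => D v = v)).card ≤ Fix1.card := by
      apply Finset.card_le_card
      intro v hv
      simp only [hAf, Finset.mem_filter, Finset.mem_univ, true_and] at hv
      simp only [hFix1, Finset.mem_filter, Finset.mem_univ, true_and]
      exact ⟨hv.2, hAnotSmall v hv.1⟩
    -- step 5 : Fix1 + Fix2 ≤ Sf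
    have step5 : Fix1.card + Fix2.card ≤ Sf.card := by
      have hdisj : Disjoint Fix1 Fix2 := by
        rw [Finset.disjoint_left]
        intro v hv hv2
        simp only [hFix1, Finset.mem_filter] at hv
        simp only [hFix2, Finset.mem_filter] at hv2
        exact hv.2.2 hv2.2.2
      rw [← Finset.card_union_of_disjoint hdisj]
      apply Finset.card_le_card
      intro v hv
      simp only [Finset.mem_union, hFix1, hFix2, Finset.mem_filter, Finset.mem_univ,
        true_and] at hv
      have hvfix : D v = v := by tauto
      simp only [hSf, Finset.mem_filter, Finset.mem_univ, true_and]
      rw [← hvfix]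
      exact hP1 v
    -- assemble
    have hAsplit := Finset.card_filter_add_card_filter_not
      (s := Af) (p := fun v => D v = v)
    have hTcard : T.ncard = Tf.card := by rw [hTf]; exact ncard_eq_filter_card T
    have hScard : S.ncard = Sf.card := by rw [hSf]; exact ncard_eq_filter_card S
    rw [hTcard, hScard]
    simp only [ne_eq] at hAsplit step2
    omega
end
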